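/- Let d_{mkℓ} ≥ 0 be nonnegative real weights for m,k ∈ {0,…,M−1}, ℓ ∈ {0,…,N−1}, and let x0 ∈ ℂ^{MN} with ‖x0‖ = 1. Set r0_{mkℓ} := x0^H A_{mkℓ} x0, λ̄ := N³ · max_{m,k,ℓ} d_{mkℓ}, and Q1 := Σ_{m,k,ℓ} d_{mkℓ} ( (r0_{mkℓ})^* A_{mkℓ} + r0_{mkℓ} A_{mkℓ}^H ). Then for every x ∈ ℂ^{MN} with ‖x‖ = 1: Σ_{m,k,ℓ} d_{mkℓ} |x^H A_{mkℓ} x|² ≤ x^H Q1 x − 2λ̄ |x^H x0|² + 2λ̄ − Σ_{m,k,ℓ} d_{mkℓ} |r0_{mkℓ}|². -/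

import Mathlib

open Matrix

/-- The `N × N` unnormalized DFT matrix, `[F]_{m,n} = exp(-2πi·mn/N)`. -/
noncomputable def dftF (N : ℕ) : Matrix (Fin N) (Fin N) ℂ :=
  Matrix.of fun m n : Fin N =>
    Complex.exp (-(2 * (Real.pi : ℂ) * Complex.I * ((m : ℕ) : ℂ) * ((n : ℕ) : ℂ)) / (N : ℂ))

/-- The `N × MN` selection matrix `S_m = e_mᵀ ⊗ I_N`. -/
def selS (M N : ℕ) (m : Fin M) : Matrix (Fin N) (Fin M × Fin N) ℂ :=
  Matrix.of fun i p => if p.1 = m ∧ p.2 = i then 1 else 0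

/-- The matrix `A_{mkℓ} = S_kᴴ diag(N·[F]_ℓ^*) S_m`. -/
noncomputable def Amat (M N : ℕ) (m k : Fin M) (ℓ : Fin N) :
    Matrix (Fin M × Fin N) (Fin M × Fin N) ℂ :=
  (selS M N k)ᴴ *
    Matrix.diagonal (fun b : Fin N => (N : ℂ) * starRingEnd ℂ (dftF N b ℓ)) * selS M N m

noncomputable def eF (N : ℕ) (b ℓ : Fin N) : ℂ :=
  Complex.exp (2 * (Real.pi : ℂ) * Complex.I * ((b : ℕ) : ℂ) * ((ℓ : ℕ) : ℂ) / (N : ℂ))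

lemma conj_dftF (N : ℕ) (b ℓ : Fin N) : starRingEnd ℂ (dftF N b ℓ) = eF N b ℓ := by
  simp only [dftF, eF, Matrix.of_apply, ← Complex.exp_conj, map_div₀, map_neg,
    _root_.map_mul, Complex.conj_I, Complex.conj_ofReal, map_natCast, map_ofNat]
  ring_nf

lemma selS_mulVec (M N : ℕ) (m : Fin M) (y : Fin M × Fin N → ℂ) :
    selS M N m *ᵥ y = fun b => y (m, b) := by
  funext b
  simp [selS, Matrix.mulVec, dotProduct, Fintype.sum_prod_type, ite_and]

lemma dot_selS_conj (M N : ℕ) (k : Fin M) (y : Fin M × Fin N → ℂ) (v : Fin N → ℂ) :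
    star y ⬝ᵥ (selS M N k)ᴴ *ᵥ v = ∑ i : Fin N, starRingEnd ℂ (y (k, i)) * v i := by
  simp only [dotProduct, Matrix.mulVec, Matrix.conjTranspose_apply, selS,
    Matrix.of_apply, Pi.star_apply, Fintype.sum_prod_type, apply_ite, ite_and, _root_.map_one, _root_.map_zero]
  simp [Finset.mul_sum]

lemma quadA (M N : ℕ) (m k : Fin M) (ℓ : Fin N) (y : Fin M × Fin N → ℂ) :
    star y ⬝ᵥ Amat M N m k ℓ *ᵥ y
      = (N : ℂ) * ∑ b : Fin N, eF N b ℓ * (starRingEnd ℂ (y (k, b))) * y (m, b) := by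
  rw [Amat, ← Matrix.mulVec_mulVec, ← Matrix.mulVec_mulVec, selS_mulVec]
  have hdiag : Matrix.diagonal (fun b : Fin N => (N : ℂ) * starRingEnd ℂ (dftF N b ℓ)) *ᵥ
      (fun b => y (m, b)) = fun b => (N : ℂ) * (eF N b ℓ * y (m, b)) := by
    funext b
    simp [Matrix.mulVec_diagonal, conj_dftF, mul_assoc]
  rw [hdiag, dot_selS_conj, Finset.mul_sum]
  congr 1; funext b; ring

lemma orth (N : ℕ) (hN : 0 < N) (b b' : Fin N) :
    ∑ ℓ : Fin N, eF N b ℓ * starRingEnd ℂ (eF N b' ℓ) = if b = b' then (N : ℂ) else 0 := by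
  have hNc : (N : ℂ) ≠ 0 := Nat.cast_ne_zero.mpr hN.ne'
  set t : ℤ := (b : ℤ) - (b' : ℤ) with ht
  set ζ : ℂ := Complex.exp (2 * (Real.pi : ℂ) * Complex.I * (t : ℂ) / N) with hζ
  have hterm : ∀ ℓ : Fin N, eF N b ℓ * starRingEnd ℂ (eF N b' ℓ) = ζ ^ (ℓ : ℕ) := by
    intro ℓ
    have hc : starRingEnd ℂ (eF N b' ℓ) =
        Complex.exp (-(2 * (Real.pi : ℂ) * Complex.I * ((b' : ℕ) : ℂ) * ((ℓ : ℕ) : ℂ)) / N) := by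
      simp only [eF, ← Complex.exp_conj, map_div₀, _root_.map_mul, Complex.conj_I,
        Complex.conj_ofReal, map_natCast, map_ofNat]
      ring_nf
    rw [eF, hc, ← Complex.exp_add, hζ, ← Complex.exp_nat_mul]
    congr 1
    push_cast [ht]
    field_simp
    ring
  simp only [hterm]
  rw [Fin.sum_univ_eq_sum_range (fun i => ζ ^ i) N]
  by_cases hbb : b = b'
  · subst hbb
    simp only [ht, sub_self, Int.cast_zero, mul_zero, zero_div, Complex.exp_zero, hζ] at hζ ⊢
    simp [hζ, if_pos rfl]
  · rw [if_neg hbb]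
    have hζN : ζ ^ N = 1 := by
      rw [hζ, ← Complex.exp_nat_mul]
      have : (N : ℂ) * (2 * (Real.pi : ℂ) * Complex.I * (t : ℂ) / N) = (t : ℂ) * (2 * Real.pi * Complex.I) := by
        field_simp
      rw [this, Complex.exp_int_mul_two_pi_mul_I]
    have hζ1 : ζ ≠ 1 := by
      rw [hζ, Ne, Complex.exp_eq_one_iff]
      rintro ⟨n, hn⟩
      have hpi : (2 * (Real.pi : ℂ) * Complex.I) ≠ 0 := by
        simp [Real.pi_ne_zero, Complex.I_ne_zero, Complex.ofReal_ne_zero]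
      rw [div_eq_iff hNc] at hn
      have htc : (t : ℂ) = (n : ℂ) * N := by
        have h2 : ((t : ℂ)) * (2 * (Real.pi:ℂ) * Complex.I) = ((n : ℂ) * N) * (2 * (Real.pi:ℂ) * Complex.I) := by
          linear_combination hn
        exact mul_right_cancel₀ hpi h2
      have htz : t = n * N := by exact_mod_cast htc
      have h1 : t ≠ 0 := by
        rw [ht, sub_ne_zero]
        exact fun h => hbb (Fin.ext (by exact_mod_cast h))
      have hdvd : (N : ℤ) ∣ t := Dvd.intro_left n htz.symm
      have habs : |t| < N := by
        rw [abs_lt, ht]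
        have := b.isLt; have := b'.isLt
        omega
      have hge : (N : ℤ) ≤ |t| := Int.le_of_dvd (abs_pos.mpr h1) ((dvd_abs _ _).mpr hdvd)
      linarith
    rw [geom_sum_eq hζ1, hζN]
    simp

lemma parseval' (N : ℕ) (hN : 0 < N) (v : Fin N → ℂ) :
    ∑ ℓ : Fin N, Complex.normSq (∑ b : Fin N, eF N b ℓ * v b)
      = N * ∑ b : Fin N, Complex.normSq (v b) := by
  have key : (∑ ℓ : Fin N, (Complex.normSq (∑ b : Fin N, eF N b ℓ * v b) : ℂ))
      = (N : ℂ) * ∑ b : Fin N, (Complex.normSq (v b) : ℂ) := by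
    calc (∑ ℓ : Fin N, (Complex.normSq (∑ b : Fin N, eF N b ℓ * v b) : ℂ))
        = ∑ ℓ : Fin N, ∑ b : Fin N, ∑ b' : Fin N,
            (eF N b ℓ * starRingEnd ℂ (eF N b' ℓ)) * (v b * starRingEnd ℂ (v b')) := by
          refine Finset.sum_congr rfl fun ℓ _ => ?_
          rw [← Complex.mul_conj, map_sum, Finset.sum_mul_sum]
          refine Finset.sum_congr rfl fun b _ => Finset.sum_congr rfl fun b' _ => ?_
          simp only [_root_.map_mul]
          ring
      _ = ∑ b : Fin N, ∑ b' : Fin N,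
            (∑ ℓ : Fin N, eF N b ℓ * starRingEnd ℂ (eF N b' ℓ)) * (v b * starRingEnd ℂ (v b')) := by
          rw [Finset.sum_comm]
          refine Finset.sum_congr rfl fun b _ => ?_
          rw [Finset.sum_comm]
          refine Finset.sum_congr rfl fun b' _ => ?_
          rw [Finset.sum_mul]
      _ = ∑ b : Fin N, (N : ℂ) * (v b * starRingEnd ℂ (v b)) := by
          refine Finset.sum_congr rfl fun b _ => ?_
          simp only [orth N hN, ite_mul, zero_mul]
          rw [Finset.sum_ite_eq]
          simp
      _ = (N : ℂ) * ∑ b : Fin N, (Complex.normSq (v b) : ℂ) := by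
          rw [Finset.mul_sum]
          simp [Complex.mul_conj]
  exact_mod_cast key

lemma fro (α : Type*) [Fintype α] (x x0 : α → ℂ)
    (hx : star x ⬝ᵥ x = 1) (hx0 : star x0 ⬝ᵥ x0 = 1) :
    ∑ p : α, ∑ q : α, Complex.normSq
        (starRingEnd ℂ (x q) * x p - starRingEnd ℂ (x0 q) * x0 p)
      = 2 - 2 * Complex.normSq (star x ⬝ᵥ x0) := by
  set s : ℂ := star x ⬝ᵥ x0 with hs
  have hsum : s = ∑ p : α, starRingEnd ℂ (x p) * x0 p := by
    simp [hs, dotProduct, Pi.star_apply, RCLike.star_def]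
  have h1 : (∑ p : α, starRingEnd ℂ (x p) * x p) = 1 := by
    simpa [dotProduct, Pi.star_apply, RCLike.star_def] using hx
  have h0 : (∑ p : α, starRingEnd ℂ (x0 p) * x0 p) = 1 := by
    simpa [dotProduct, Pi.star_apply, RCLike.star_def] using hx0
  have key : (∑ p : α, ∑ q : α, (Complex.normSq
        (starRingEnd ℂ (x q) * x p - starRingEnd ℂ (x0 q) * x0 p) : ℂ))
      = 2 - 2 * (Complex.normSq s : ℂ) := by
    have expand : ∀ p q : α, (Complex.normSq
          (starRingEnd ℂ (x q) * x p - starRingEnd ℂ (x0 q) * x0 p) : ℂ)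
        = (starRingEnd ℂ (x p) * x p) * (starRingEnd ℂ (x q) * x q)
          + (starRingEnd ℂ (x0 p) * x0 p) * (starRingEnd ℂ (x0 q) * x0 q)
          - (x p * starRingEnd ℂ (x0 p)) * (starRingEnd ℂ (x q) * x0 q)
          - (starRingEnd ℂ (x p) * x0 p) * (x q * starRingEnd ℂ (x0 q)) := by
      intro p q
      rw [← Complex.mul_conj]
      simp only [map_sub, _root_.map_mul, Complex.conj_conj]
      ring
    simp only [expand, Finset.sum_sub_distrib, Finset.sum_add_distrib,
      ← Finset.sum_mul, ← Finset.mul_sum]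
    have hcs : (∑ p : α, x p * starRingEnd ℂ (x0 p)) = starRingEnd ℂ s := by
      rw [hsum, map_sum]
      simp [mul_comm]
    rw [h1, h0, ← hsum, hcs]
    have hns : starRingEnd ℂ s * s = (Complex.normSq s : ℂ) := by
      rw [mul_comm, Complex.mul_conj]
    rw [hns, Complex.mul_conj]
    ring
  exact_mod_cast key

lemma dot_conjT {n : Type*} [Fintype n] (A : Matrix n n ℂ) (y : n → ℂ) :
    star y ⬝ᵥ Aᴴ *ᵥ y = starRingEnd ℂ (star y ⬝ᵥ A *ᵥ y) := by
  simp only [dotProduct, Matrix.mulVec, Matrix.conjTranspose_apply, map_sum,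
    _root_.map_mul, Pi.star_apply, RCLike.star_def, Finset.mul_sum, Complex.conj_conj]
  rw [Finset.sum_comm]
  exact Finset.sum_congr rfl fun i _ => Finset.sum_congr rfl fun j _ => by ring

lemma le_sup3 {M N : ℕ} (d : Fin M → Fin M → Fin N → ℝ) (m k : Fin M) (ℓ : Fin N) :
    d m k ℓ ≤ ⨆ m, ⨆ k, ⨆ ℓ, d m k ℓ := by
  calc d m k ℓ ≤ ⨆ ℓ, d m k ℓ :=
        le_ciSup (Set.Finite.bddAbove (Set.finite_range _)) ℓ
    _ ≤ ⨆ k, ⨆ ℓ, d m k ℓ :=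
        le_ciSup (f := fun k => ⨆ ℓ, d m k ℓ) (Set.Finite.bddAbove (Set.finite_range _)) k
    _ ≤ ⨆ m, ⨆ k, ⨆ ℓ, d m k ℓ :=
        le_ciSup (f := fun m => ⨆ k, ⨆ ℓ, d m k ℓ) (Set.Finite.bddAbove (Set.finite_range _)) m

lemma sumA_mulVec {ι n m : Type*} [Fintype n] (s : Finset ι) (A : ι → Matrix m n ℂ) (v : n → ℂ) :
    (∑ i ∈ s, A i) *ᵥ v = ∑ i ∈ s, A i *ᵥ v := by
  funext j
  simp only [Matrix.mulVec, dotProduct, Finset.sum_apply, Finset.sum_mul,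
    Matrix.sum_apply]
  rw [Finset.sum_comm]

lemma dot_sum {ι n : Type*} [Fintype n] (s : Finset ι) (u : n → ℂ) (f : ι → n → ℂ) :
    u ⬝ᵥ (∑ i ∈ s, f i) = ∑ i ∈ s, u ⬝ᵥ f i := by
  simp only [dotProduct, Finset.sum_apply, Finset.mul_sum]
  rw [Finset.sum_comm]

lemma quadQ1 {n : Type*} [Fintype n] (A : Matrix n n ℂ) (dd : ℝ) (r0 : ℂ) (y : n → ℂ) :
    (star y ⬝ᵥ ((dd : ℂ) • (starRingEnd ℂ r0 • A + r0 • Aᴴ)) *ᵥ y).re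
      = dd * (2 * (starRingEnd ℂ r0 * (star y ⬝ᵥ A *ᵥ y)).re) := by
  rw [Matrix.smul_mulVec, dotProduct_smul, Matrix.add_mulVec,
    dotProduct_add, Matrix.smul_mulVec, Matrix.smul_mulVec,
    dotProduct_smul, dotProduct_smul, dot_conjT]
  set z : ℂ := star y ⬝ᵥ A *ᵥ y with hz
  have h : starRingEnd ℂ r0 • z + r0 • starRingEnd ℂ z
      = ((2 * (starRingEnd ℂ r0 * z).re : ℝ) : ℂ) := by
    have : r0 • starRingEnd ℂ z = starRingEnd ℂ (starRingEnd ℂ r0 * z) := by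
      simp [smul_eq_mul, _root_.map_mul]
    rw [this, smul_eq_mul, Complex.add_conj]
  rw [h, smul_eq_mul]
  have : ((dd : ℂ) * ((2 * (starRingEnd ℂ r0 * z).re : ℝ) : ℂ))
      = ((dd * (2 * (starRingEnd ℂ r0 * z).re) : ℝ) : ℂ) := by push_cast; ring
  rw [this, Complex.ofReal_re]

/-- Corollary 1 of the paper, with the additive constant explicit:
with `r0_{mkℓ} = x0ᴴ A_{mkℓ} x0`, `λ̄ = N³ max d`, and
`Q1 = Σ d ((r0)^* A + r0 Aᴴ)`, for all unit-norm `x`: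
`Σ d |xᴴ A x|² ≤ xᴴ Q1 x − 2λ̄ |xᴴ x0|² + 2λ̄ − Σ d |r0|²`. -/
theorem stmt10 (M N : ℕ) (hM : 0 < M) (hN : 0 < N)
    (d : Fin M → Fin M → Fin N → ℝ) (hd : ∀ m k ℓ, 0 ≤ d m k ℓ)
    (x0 : Fin M × Fin N → ℂ) (hx0 : star x0 ⬝ᵥ x0 = 1)
    (x : Fin M × Fin N → ℂ) (hx : star x ⬝ᵥ x = 1) :
    ∑ m : Fin M, ∑ k : Fin M, ∑ ℓ : Fin N,
        d m k ℓ * ‖star x ⬝ᵥ Amat M N m k ℓ *ᵥ x‖ ^ 2 ≤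
      (star x ⬝ᵥ (∑ m : Fin M, ∑ k : Fin M, ∑ ℓ : Fin N, (d m k ℓ : ℂ) •
          (starRingEnd ℂ (star x0 ⬝ᵥ Amat M N m k ℓ *ᵥ x0) • Amat M N m k ℓ +
            (star x0 ⬝ᵥ Amat M N m k ℓ *ᵥ x0) • (Amat M N m k ℓ)ᴴ)) *ᵥ x).re
        - 2 * ((N : ℝ) ^ 3 * ⨆ m, ⨆ k, ⨆ ℓ, d m k ℓ) * ‖star x ⬝ᵥ x0‖ ^ 2
        + 2 * ((N : ℝ) ^ 3 * ⨆ m, ⨆ k, ⨆ ℓ, d m k ℓ)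
        - ∑ m : Fin M, ∑ k : Fin M, ∑ ℓ : Fin N,
            d m k ℓ * ‖star x0 ⬝ᵥ Amat M N m k ℓ *ᵥ x0‖ ^ 2 := by
  set Dmax : ℝ := ⨆ m, ⨆ k, ⨆ ℓ, d m k ℓ with hDmax
  have hD0 : 0 ≤ Dmax := le_trans (hd ⟨0, hM⟩ ⟨0, hM⟩ ⟨0, hN⟩) (le_sup3 d _ _ _)
  set r : Fin M → Fin M → Fin N → ℂ :=
    fun m k ℓ => star x ⬝ᵥ Amat M N m k ℓ *ᵥ x with hr
  set r0 : Fin M → Fin M → Fin N → ℂ :=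
    fun m k ℓ => star x0 ⬝ᵥ Amat M N m k ℓ *ᵥ x0 with hr0
  set w : Fin M → Fin M → Fin N → ℂ := fun m k b =>
    starRingEnd ℂ (x (k, b)) * x (m, b) - starRingEnd ℂ (x0 (k, b)) * x0 (m, b) with hw
  -- the quadratic form of Q1
  have hQ : (star x ⬝ᵥ (∑ m : Fin M, ∑ k : Fin M, ∑ ℓ : Fin N, (d m k ℓ : ℂ) •
          (starRingEnd ℂ (r0 m k ℓ) • Amat M N m k ℓ +
            (r0 m k ℓ) • (Amat M N m k ℓ)ᴴ)) *ᵥ x).re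
      = ∑ m : Fin M, ∑ k : Fin M, ∑ ℓ : Fin N,
          d m k ℓ * (2 * (starRingEnd ℂ (r0 m k ℓ) * r m k ℓ).re) := by
    rw [sumA_mulVec, dot_sum, Complex.re_sum]
    refine Finset.sum_congr rfl fun m _ => ?_
    rw [sumA_mulVec, dot_sum, Complex.re_sum]
    refine Finset.sum_congr rfl fun k _ => ?_
    rw [sumA_mulVec, dot_sum, Complex.re_sum]
    exact Finset.sum_congr rfl fun ℓ _ => quadQ1 _ _ _ _
  -- pointwise algebraic identity
  have hid : ∀ z z0 : ℂ, Complex.normSq z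
      = 2 * (starRingEnd ℂ z0 * z).re - Complex.normSq z0 + Complex.normSq (z - z0) := by
    intro z z0
    simp only [Complex.normSq_apply, Complex.mul_re, Complex.sub_re, Complex.sub_im,
      Complex.conj_re, Complex.conj_im]
    ring
  -- Parseval per (m,k)
  have hpar : ∀ m k, (∑ ℓ : Fin N, Complex.normSq (r m k ℓ - r0 m k ℓ))
      = (N : ℝ) ^ 3 * ∑ b : Fin N, Complex.normSq (w m k b) := by
    intro m k
    have hdiff : ∀ ℓ, r m k ℓ - r0 m k ℓ = (N : ℂ) * ∑ b : Fin N, eF N b ℓ * w m k b := by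
      intro ℓ
      show (star x ⬝ᵥ Amat M N m k ℓ *ᵥ x) - (star x0 ⬝ᵥ Amat M N m k ℓ *ᵥ x0) = _
      rw [quadA, quadA, ← mul_sub, ← Finset.sum_sub_distrib]
      congr 1
      refine Finset.sum_congr rfl fun b _ => ?_
      simp only [hw]
      ring
    calc (∑ ℓ : Fin N, Complex.normSq (r m k ℓ - r0 m k ℓ))
        = ∑ ℓ : Fin N, (N : ℝ) ^ 2 * Complex.normSq (∑ b : Fin N, eF N b ℓ * w m k b) := by
          refine Finset.sum_congr rfl fun ℓ _ => ?_
          rw [hdiff ℓ, Complex.normSq_mul, Complex.normSq_natCast]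
          ring
      _ = (N : ℝ) ^ 2 * ∑ ℓ : Fin N, Complex.normSq (∑ b : Fin N, eF N b ℓ * w m k b) := by
          rw [Finset.mul_sum]
      _ = (N : ℝ) ^ 3 * ∑ b : Fin N, Complex.normSq (w m k b) := by
          rw [parseval' N hN]
          ring
  -- subset Frobenius bound
  have hsub : (∑ m : Fin M, ∑ k : Fin M, ∑ b : Fin N, Complex.normSq (w m k b))
      ≤ 2 - 2 * Complex.normSq (star x ⬝ᵥ x0) := by
    rw [← fro _ x x0 hx hx0]
    rw [Fintype.sum_prod_type]
    refine Finset.sum_le_sum fun m _ => ?_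
    rw [Finset.sum_comm]
    refine Finset.sum_le_sum fun b _ => ?_
    rw [Fintype.sum_prod_type]
    refine Finset.sum_le_sum fun k _ => ?_
    exact Finset.single_le_sum
      (f := fun b' => Complex.normSq (starRingEnd ℂ (x (k, b')) * x (m, b)
        - starRingEnd ℂ (x0 (k, b')) * x0 (m, b)))
      (fun b' _ => Complex.normSq_nonneg _) (Finset.mem_univ b)
  -- bound the error sum
  have hE : (∑ m : Fin M, ∑ k : Fin M, ∑ ℓ : Fin N,
        d m k ℓ * Complex.normSq (r m k ℓ - r0 m k ℓ))
      ≤ 2 * ((N : ℝ) ^ 3 * Dmax) - 2 * ((N : ℝ) ^ 3 * Dmax) * Complex.normSq (star x ⬝ᵥ x0) := by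
    have step1 : (∑ m : Fin M, ∑ k : Fin M, ∑ ℓ : Fin N,
          d m k ℓ * Complex.normSq (r m k ℓ - r0 m k ℓ))
        ≤ Dmax * ∑ m : Fin M, ∑ k : Fin M, ∑ ℓ : Fin N,
            Complex.normSq (r m k ℓ - r0 m k ℓ) := by
      rw [Finset.mul_sum]
      refine Finset.sum_le_sum fun m _ => ?_
      rw [Finset.mul_sum]
      refine Finset.sum_le_sum fun k _ => ?_
      rw [Finset.mul_sum]
      refine Finset.sum_le_sum fun ℓ _ => ?_
      exact mul_le_mul_of_nonneg_right (le_sup3 d m k ℓ) (Complex.normSq_nonneg _)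
    have step2 : (∑ m : Fin M, ∑ k : Fin M, ∑ ℓ : Fin N,
          Complex.normSq (r m k ℓ - r0 m k ℓ))
        = (N : ℝ) ^ 3 * ∑ m : Fin M, ∑ k : Fin M, ∑ b : Fin N, Complex.normSq (w m k b) := by
      rw [Finset.mul_sum]
      refine Finset.sum_congr rfl fun m _ => ?_
      rw [Finset.mul_sum]
      exact Finset.sum_congr rfl fun k _ => hpar m k
    have hN3 : (0 : ℝ) ≤ (N : ℝ) ^ 3 := by positivity
    calc (∑ m : Fin M, ∑ k : Fin M, ∑ ℓ : Fin N,
          d m k ℓ * Complex.normSq (r m k ℓ - r0 m k ℓ))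
        ≤ Dmax * ((N : ℝ) ^ 3 * ∑ m : Fin M, ∑ k : Fin M, ∑ b : Fin N,
            Complex.normSq (w m k b)) := by rw [← step2]; exact step1
      _ ≤ Dmax * ((N : ℝ) ^ 3 * (2 - 2 * Complex.normSq (star x ⬝ᵥ x0))) := by
          refine mul_le_mul_of_nonneg_left ?_ hD0
          exact mul_le_mul_of_nonneg_left hsub hN3
      _ = 2 * ((N : ℝ) ^ 3 * Dmax) - 2 * ((N : ℝ) ^ 3 * Dmax) * Complex.normSq (star x ⬝ᵥ x0) := by
          ring
  -- put everything together
  show (∑ m : Fin M, ∑ k : Fin M, ∑ ℓ : Fin N,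
        d m k ℓ * ‖r m k ℓ‖ ^ 2) ≤
      (star x ⬝ᵥ (∑ m : Fin M, ∑ k : Fin M, ∑ ℓ : Fin N, (d m k ℓ : ℂ) •
          (starRingEnd ℂ (r0 m k ℓ) • Amat M N m k ℓ +
            (r0 m k ℓ) • (Amat M N m k ℓ)ᴴ)) *ᵥ x).re
        - 2 * ((N : ℝ) ^ 3 * Dmax) * ‖star x ⬝ᵥ x0‖ ^ 2
        + 2 * ((N : ℝ) ^ 3 * Dmax)
        - ∑ m : Fin M, ∑ k : Fin M, ∑ ℓ : Fin N,
            d m k ℓ * ‖r0 m k ℓ‖ ^ 2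
  rw [hQ]
  simp only [Complex.sq_norm]
  have hsplit : (∑ m : Fin M, ∑ k : Fin M, ∑ ℓ : Fin N,
        d m k ℓ * Complex.normSq (r m k ℓ))
      = (∑ m : Fin M, ∑ k : Fin M, ∑ ℓ : Fin N,
          d m k ℓ * (2 * (starRingEnd ℂ (r0 m k ℓ) * r m k ℓ).re))
        - (∑ m : Fin M, ∑ k : Fin M, ∑ ℓ : Fin N, d m k ℓ * Complex.normSq (r0 m k ℓ))
        + (∑ m : Fin M, ∑ k : Fin M, ∑ ℓ : Fin N,
            d m k ℓ * Complex.normSq (r m k ℓ - r0 m k ℓ)) := by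
    simp only [← Finset.sum_sub_distrib, ← Finset.sum_add_distrib]
    refine Finset.sum_congr rfl fun m _ => Finset.sum_congr rfl fun k _ =>
      Finset.sum_congr rfl fun ℓ _ => ?_
    rw [hid (r m k ℓ) (r0 m k ℓ)]
    ring
  rw [hsplit]
  linarith [hE]
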